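/- The operator ∇⁰_Z is compatible with the module-valued inner product: for Schwartz functions f, g one has ⟨∇⁰_Z f, g⟩(x,y,p) + ⟨f, ∇⁰_Z g⟩(x,y,p) = 2πi p ⟨f,g⟩(x,y,p) = δ_Z(⟨f,g⟩)(x,y,p), where ⟨f,g⟩(x,y,p) = Σ_k e(-ckp(y-pν)) f(x+k,y) conj(g(x-2pμ+k, y-2pν)) and (∇⁰_Z f)(x,y) = (πix/μ) f(x,y). -/

import Mathlib

open Real

/-- The D-valued inner product ⟨f,g⟩(x,y,p) = Σ_k e(-ckp(y-pν)) f(x+k,y) conj(g(x-2pμ+k, y-2pν)). -/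
noncomputable def ip (c : ℕ) (μ ν : ℝ) (f g : ℝ → ℝ → ℂ) (x y : ℝ) (p : ℤ) : ℂ :=
  ∑' k : ℤ, Complex.exp (2 * (π : ℂ) * Complex.I *
      (-((c : ℂ) * (k : ℂ) * (p : ℂ) * ((y : ℂ) - (p : ℂ) * (ν : ℂ)))))
    * f (x + k) y * (starRingEnd ℂ) (g (x - 2 * p * μ + k) (y - 2 * p * ν))

noncomputable def nablaZ (μ : ℝ) (f : ℝ → ℝ → ℂ) (x y : ℝ) : ℂ :=
  (π : ℂ) * Complex.I * (x : ℂ) / (μ : ℂ) * f x y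

noncomputable def deltaZ (φ : ℝ → ℝ → ℤ → ℂ) (x y : ℝ) (p : ℤ) : ℂ :=
  2 * (π : ℂ) * Complex.I * (p : ℂ) * φ x y p

-- auxiliary lemmas

lemma aux_summable : Summable (fun k : ℤ => 1 / (1 + |(k : ℝ)|) ^ 2) := by
  have hnat : Summable (fun n : ℕ => 1 / (1 + (n : ℝ)) ^ 2) := by
    have := (Real.summable_one_div_nat_pow (p := 2)).mpr one_lt_two
    have h2 := (summable_nat_add_iff (f := fun n : ℕ => 1 / (n : ℝ) ^ 2) 1).mpr this
    refine h2.congr fun n => by push_cast; ring_nf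
  apply Summable.of_nat_of_neg
  · exact hnat.congr fun n => by norm_num
  · refine hnat.congr fun n => by push_cast; norm_num

lemma aux_decay (f : SchwartzMap (ℝ × ℝ) ℂ) :
    ∃ C : ℝ, 0 ≤ C ∧ ∀ v : ℝ × ℝ, (1 + ‖v‖) ^ 3 * ‖f v‖ ≤ C := by
  refine ⟨2 ^ 3 * (Finset.Iic ((3, 0) : ℕ × ℕ)).sup
    (fun m => SchwartzMap.seminorm ℝ m.1 m.2) f, by positivity, fun v => ?_⟩
  have := SchwartzMap.one_add_le_sup_seminorm_apply (𝕜 := ℝ) (m := ((3, 0) : ℕ × ℕ))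
    (k := 3) (n := 0) le_rfl le_rfl f v
  simpa [norm_iteratedFDeriv_zero] using this

lemma aux_key (f g : SchwartzMap (ℝ × ℝ) ℂ) (x₁ y₁ x₂ y₂ A B : ℝ) :
    Summable (fun k : ℤ =>
      (|A| + |B| * |(k : ℝ)|) * (‖f (x₁ + k, y₁)‖ * ‖g (x₂ + k, y₂)‖)) := by
  obtain ⟨Cf, hCf0, hCf⟩ := aux_decay f
  have hCg : ∀ v, ‖g v‖ ≤ SchwartzMap.seminorm ℝ 0 0 g :=
    fun v => SchwartzMap.norm_le_seminorm ℝ g v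
  set Cg := SchwartzMap.seminorm ℝ 0 0 g with hCgdef
  have hCg0 : 0 ≤ Cg := le_trans (norm_nonneg _) (hCg (0, 0))
  set D := (|A| + |B|) * ((1 + |x₁|) ^ 3 * Cf * Cg) with hD
  refine Summable.of_nonneg_of_le (fun k => by positivity) (fun k => ?_)
    ((aux_summable.mul_left D).congr (fun k => rfl))
  have hk1 : (0:ℝ) < 1 + |(k:ℝ)| := by positivity
  have hbound : ‖f (x₁ + k, y₁)‖ ≤ Cf * (1 + |x₁|) ^ 3 / (1 + |(k:ℝ)|) ^ 3 := by
    rw [le_div_iff₀ (by positivity)]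
    have h1 : (1 + |(k:ℝ)|) ≤ (1 + |x₁|) * (1 + |x₁ + k|) := by
      have : |(k:ℝ)| ≤ |x₁ + k| + |x₁| := by
        have h := abs_sub (x₁ + (k:ℝ)) x₁
        simpa using h
      nlinarith [abs_nonneg x₁, abs_nonneg (x₁ + (k:ℝ))]
    have h2 : |x₁ + (k:ℝ)| ≤ ‖((x₁ + k, y₁) : ℝ × ℝ)‖ := by
      have := le_max_left ‖x₁ + (k:ℝ)‖ ‖y₁‖
      simpa [Prod.norm_def, Real.norm_eq_abs] using this
    have h3 : (1 + |(k:ℝ)|) ^ 3 ≤ (1 + |x₁|) ^ 3 * (1 + ‖((x₁ + k, y₁) : ℝ × ℝ)‖) ^ 3 := by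
      calc (1 + |(k:ℝ)|) ^ 3 ≤ ((1 + |x₁|) * (1 + |x₁ + (k:ℝ)|)) ^ 3 := by
            apply pow_le_pow_left₀ hk1.le h1
        _ ≤ ((1 + |x₁|) * (1 + ‖((x₁ + k, y₁) : ℝ × ℝ)‖)) ^ 3 := by
            apply pow_le_pow_left₀ (by positivity)
            have : (0:ℝ) ≤ 1 + |x₁| := by positivity
            nlinarith [abs_nonneg x₁]
        _ = _ := by ring
    calc ‖f (x₁ + k, y₁)‖ * (1 + |(k:ℝ)|) ^ 3
        ≤ ‖f (x₁ + k, y₁)‖ * ((1 + |x₁|) ^ 3 * (1 + ‖((x₁ + k, y₁) : ℝ × ℝ)‖) ^ 3) := by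
          apply mul_le_mul_of_nonneg_left h3 (norm_nonneg _)
      _ = (1 + ‖((x₁ + k, y₁) : ℝ × ℝ)‖) ^ 3 * ‖f (x₁ + k, y₁)‖ * (1 + |x₁|) ^ 3 := by ring
      _ ≤ Cf * (1 + |x₁|) ^ 3 := by
          apply mul_le_mul_of_nonneg_right (hCf _) (by positivity)
  calc (|A| + |B| * |(k:ℝ)|) * (‖f (x₁ + k, y₁)‖ * ‖g (x₂ + k, y₂)‖)
      ≤ ((|A| + |B|) * (1 + |(k:ℝ)|)) * ((Cf * (1 + |x₁|) ^ 3 / (1 + |(k:ℝ)|) ^ 3) * Cg) := by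
        apply mul_le_mul
        · nlinarith [abs_nonneg A, abs_nonneg B, abs_nonneg ((k:ℝ))]
        · exact mul_le_mul hbound (hCg _) (norm_nonneg _) (by positivity)
        · positivity
        · positivity
    _ = D * (1 / (1 + |(k:ℝ)|) ^ 2) := by
        field_simp [hD]
        ring

/-- ∇⁰_Z is compatible with the module-valued inner product:
⟨∇⁰_Z f, g⟩ + ⟨f, ∇⁰_Z g⟩ = 2πip ⟨f,g⟩ = δ_Z(⟨f,g⟩). -/
theorem stmt5 (c : ℕ) (hc : 0 < c) (μ ν : ℝ) (hμ : μ ≠ 0) (hν : ν ≠ 0)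
    (f g : SchwartzMap (ℝ × ℝ) ℂ) :
    ∀ (x y : ℝ) (p : ℤ),
      ip c μ ν (nablaZ μ (fun a b => f (a, b))) (fun a b => g (a, b)) x y p
          + ip c μ ν (fun a b => f (a, b)) (nablaZ μ (fun a b => g (a, b))) x y p
        = 2 * (π : ℂ) * Complex.I * (p : ℂ)
            * ip c μ ν (fun a b => f (a, b)) (fun a b => g (a, b)) x y p
      ∧ ip c μ ν (nablaZ μ (fun a b => f (a, b))) (fun a b => g (a, b)) x y p
          + ip c μ ν (fun a b => f (a, b)) (nablaZ μ (fun a b => g (a, b))) x y p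
        = deltaZ (ip c μ ν (fun a b => f (a, b)) (fun a b => g (a, b))) x y p := by
  intro x y p
  have hμℂ : (μ : ℂ) ≠ 0 := by exact_mod_cast hμ
  set s : ℤ → ℂ := fun k => Complex.exp (2 * (π : ℂ) * Complex.I *
      (-((c : ℂ) * (k : ℂ) * (p : ℂ) * ((y : ℂ) - (p : ℂ) * (ν : ℂ)))))
    * f (x + k, y) * (starRingEnd ℂ) (g (x - 2 * p * μ + k, y - 2 * p * ν)) with hs
  have hnorm_exp : ∀ k : ℤ, ‖Complex.exp (2 * (π : ℂ) * Complex.I *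
      (-((c : ℂ) * (k : ℂ) * (p : ℂ) * ((y : ℂ) - (p : ℂ) * (ν : ℂ)))))‖ = 1 := by
    intro k
    have harg : 2 * (π : ℂ) * Complex.I *
        (-((c : ℂ) * (k : ℂ) * (p : ℂ) * ((y : ℂ) - (p : ℂ) * (ν : ℂ))))
        = ((-(2 * π * (c * k * p * (y - p * ν))) : ℝ) : ℂ) * Complex.I := by
      push_cast; ring
    rw [harg, Complex.norm_exp]
    simp
  have hsnorm : ∀ k : ℤ, ‖s k‖ = ‖f (x + k, y)‖ * ‖g (x - 2 * p * μ + k, y - 2 * p * ν)‖ := by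
    intro k
    simp only [hs, norm_mul, hnorm_exp k, one_mul, RCLike.norm_conj]
  -- coefficient functions
  set a : ℤ → ℂ := fun k => (π : ℂ) * Complex.I * ((x : ℂ) + (k : ℂ)) / (μ : ℂ) with ha
  set b : ℤ → ℂ := fun k =>
    -((π : ℂ) * Complex.I * ((x : ℂ) - 2 * (p : ℂ) * (μ : ℂ) + (k : ℂ)) / (μ : ℂ)) with hb
  have h1 : ip c μ ν (nablaZ μ (fun a b => f (a, b))) (fun a b => g (a, b)) x y p
      = ∑' k : ℤ, a k * s k := by
    refine tsum_congr fun k => ?_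
    simp only [ip, nablaZ, hs, ha]
    push_cast
    ring
  have h2 : ip c μ ν (fun a b => f (a, b)) (nablaZ μ (fun a b => g (a, b))) x y p
      = ∑' k : ℤ, b k * s k := by
    refine tsum_congr fun k => ?_
    simp only [ip, nablaZ, hs, hb, map_mul, map_div₀, Complex.conj_I]
    push_cast
    simp only [map_mul, map_add, map_sub, map_ofNat, Complex.conj_ofReal, Complex.conj_I,
      map_intCast]
    ring
  have hanorm : ∀ k : ℤ, ‖a k‖ ≤ |π * x / μ| + |π / μ| * |(k : ℝ)| := by
    intro k
    have : a k = ((π * x / μ : ℝ) : ℂ) * Complex.I + ((π / μ : ℝ) : ℂ) * (k : ℝ) * Complex.I := by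
      simp only [ha]; push_cast; field_simp
    rw [this]
    calc ‖((π * x / μ : ℝ) : ℂ) * Complex.I + ((π / μ : ℝ) : ℂ) * (k : ℝ) * Complex.I‖
        ≤ ‖((π * x / μ : ℝ) : ℂ) * Complex.I‖ + ‖((π / μ : ℝ) : ℂ) * (k : ℝ) * Complex.I‖ :=
          norm_add_le _ _
      _ = |π * x / μ| + |π / μ| * |(k : ℝ)| := by
          simp only [norm_mul, Complex.norm_I, mul_one, Complex.norm_real, Real.norm_eq_abs]
  have hbnorm : ∀ k : ℤ,
      ‖b k‖ ≤ |π * (x - 2 * p * μ) / μ| + |π / μ| * |(k : ℝ)| := by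
    intro k
    have : b k = -(((π * (x - 2 * p * μ) / μ : ℝ) : ℂ) * Complex.I
        + ((π / μ : ℝ) : ℂ) * (k : ℝ) * Complex.I) := by
      simp only [hb]; push_cast; field_simp
    rw [this, norm_neg]
    calc ‖((π * (x - 2 * p * μ) / μ : ℝ) : ℂ) * Complex.I
          + ((π / μ : ℝ) : ℂ) * (k : ℝ) * Complex.I‖
        ≤ ‖((π * (x - 2 * p * μ) / μ : ℝ) : ℂ) * Complex.I‖
          + ‖((π / μ : ℝ) : ℂ) * (k : ℝ) * Complex.I‖ := norm_add_le _ _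
      _ = |π * (x - 2 * p * μ) / μ| + |π / μ| * |(k : ℝ)| := by
          simp only [norm_mul, Complex.norm_I, mul_one, Complex.norm_real, Real.norm_eq_abs]
  have hsum1 : Summable fun k : ℤ => a k * s k := by
    apply Summable.of_norm_bounded
      ((aux_key f g x y (x - 2 * p * μ) (y - 2 * p * ν) (π * x / μ) (π / μ)).congr fun k => rfl)
    intro k
    rw [norm_mul, hsnorm k]
    exact mul_le_mul_of_nonneg_right (by simpa [abs_abs] using hanorm k)
      (by positivity)
  have hsum2 : Summable fun k : ℤ => b k * s k := by
    apply Summable.of_norm_bounded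
      ((aux_key f g x y (x - 2 * p * μ) (y - 2 * p * ν)
        (π * (x - 2 * p * μ) / μ) (π / μ)).congr fun k => rfl)
    intro k
    rw [norm_mul, hsnorm k]
    exact mul_le_mul_of_nonneg_right (by simpa [abs_abs] using hbnorm k)
      (by positivity)
  have hip : ip c μ ν (fun a b => f (a, b)) (fun a b => g (a, b)) x y p = ∑' k : ℤ, s k :=
    tsum_congr fun k => rfl
  have hab : ∀ k : ℤ, a k * s k + b k * s k
      = 2 * (π : ℂ) * Complex.I * (p : ℂ) * s k := by
    intro k
    have : a k + b k = 2 * (π : ℂ) * Complex.I * (p : ℂ) := by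
      simp only [ha, hb]
      field_simp
      ring
    rw [← add_mul, this]
  have hmain : ip c μ ν (nablaZ μ (fun a b => f (a, b))) (fun a b => g (a, b)) x y p
      + ip c μ ν (fun a b => f (a, b)) (nablaZ μ (fun a b => g (a, b))) x y p
      = 2 * (π : ℂ) * Complex.I * (p : ℂ)
        * ip c μ ν (fun a b => f (a, b)) (fun a b => g (a, b)) x y p := by
    rw [h1, h2, ← Summable.tsum_add hsum1 hsum2, hip, ← tsum_mul_left]
    exact tsum_congr hab
  exact ⟨hmain, by rw [hmain]; simp [deltaZ]⟩
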